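/- arXiv:1308.2883 — 5 statements merged into one kernel-verified Lean document; each statement's English description precedes it below -/
import Mathlib

section
/- Let k > 0, a > 0, C > 0, and 0 < ℓ < 1 with C·ℓ > 1 and C·ℓ³ > 1. Then for every R > 0, the quantity f(R) = (aℓ/k)(1 − Cℓ³) + kR(1 − Cℓ³)·tanh(aR) + (ℓ − Cℓ³)·aR + (1 − Cℓ⁴)·tanh(aR) is strictly negative. -/
lemma sinh_lt_mul_cosh {x : ℝ} (hx : 0 < x) : Real.sinh x < x * Real.cosh x := by
  have hmono : StrictMonoOn (fun t : ℝ => t * Real.cosh t - Real.sinh t) (Set.Ici 0) := by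
    apply strictMonoOn_of_deriv_pos (convex_Ici 0)
    · fun_prop
    · intro t ht
      rw [interior_Ici, Set.mem_Ioi] at ht
      have : HasDerivAt (fun t : ℝ => t * Real.cosh t - Real.sinh t)
          (1 * Real.cosh t + t * Real.sinh t - Real.cosh t) t := by
        exact ((hasDerivAt_id t).mul (Real.hasDerivAt_cosh t)).sub (Real.hasDerivAt_sinh t)
      rw [this.deriv]
      have := Real.sinh_pos_iff.mpr ht
      nlinarith
  have := hmono (Set.self_mem_Ici) (Set.mem_Ici.mpr hx.le) hx
  simpa using this

lemma tanh_pos_lt {x : ℝ} (hx : 0 < x) : 0 < Real.tanh x ∧ Real.tanh x < x := by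
  have hc : 0 < Real.cosh x := Real.cosh_pos (x:=x)
  have hs : 0 < Real.sinh x := Real.sinh_pos_iff.mpr hx
  rw [Real.tanh_eq_sinh_div_cosh]
  constructor
  · positivity
  · rw [div_lt_iff₀ hc]
    exact sinh_lt_mul_cosh hx

/-- Non-existence sign computation in 3D for `A < 0`: the function `f_-(R)` is
strictly negative for every `R > 0`. -/
theorem quasiMorse_3d_fminus_neg (k a C ℓ : ℝ) (hk : 0 < k) (ha : 0 < a)
    (hC : 0 < C) (hℓ0 : 0 < ℓ) (hℓ1 : ℓ < 1) (hCℓ : 1 < C * ℓ)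
    (hCℓ3 : 1 < C * ℓ ^ 3) :
    ∀ R : ℝ, 0 < R →
      (a * ℓ / k) * (1 - C * ℓ ^ 3) + k * R * (1 - C * ℓ ^ 3) * Real.tanh (a * R)
        + (ℓ - C * ℓ ^ 3) * (a * R) + (1 - C * ℓ ^ 4) * Real.tanh (a * R) < 0 := by
  intro R hR
  have haR : 0 < a * R := mul_pos ha hR
  obtain ⟨ht0, htlt⟩ := tanh_pos_lt haR
  set t := Real.tanh (a * R)
  have h1 : 1 - C * ℓ ^ 3 < 0 := by linarith
  have hterm1 : (a * ℓ / k) * (1 - C * ℓ ^ 3) < 0 := by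
    apply mul_neg_of_pos_of_neg (by positivity) h1
  have hterm2 : k * R * (1 - C * ℓ ^ 3) * t ≤ 0 := by
    apply mul_nonpos_of_nonpos_of_nonneg _ ht0.le
    exact mul_nonpos_of_nonneg_of_nonpos (by positivity) h1.le
  -- ℓ - C ℓ³ = ℓ(1 - Cℓ²) < 0 since Cℓ² > Cℓ³ > 1
  have hCℓ2 : 1 < C * ℓ ^ 2 := by nlinarith
  have hterm3 : (ℓ - C * ℓ ^ 3) * (a * R) < 0 := by
    apply mul_neg_of_neg_of_pos _ haR
    nlinarith
  rcases le_or_gt (1 - C * ℓ ^ 4) 0 with h4 | h4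
  · have hterm4 : (1 - C * ℓ ^ 4) * t ≤ 0 := mul_nonpos_of_nonpos_of_nonneg h4 ht0.le
    linarith
  · have hterm4 : (1 - C * ℓ ^ 4) * t < (1 - C * ℓ ^ 4) * (a * R) :=
      (mul_lt_mul_iff_right₀ h4).mpr htlt
    have key : (ℓ - C * ℓ ^ 3) * (a * R) + (1 - C * ℓ ^ 4) * (a * R) < 0 := by
      have heq : (ℓ - C * ℓ ^ 3) * (a * R) + (1 - C * ℓ ^ 4) * (a * R)
          = (1 + ℓ) * (1 - C * ℓ ^ 3) * (a * R) := by ring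
      rw [heq]
      apply mul_neg_of_neg_of_pos _ haR
      nlinarith
    linarith
end

section
/- Let a, k > 0 and 0 < ℓ < 1, and define g(R) = (a/k)·((a²ℓ − k²)·kR + a²ℓ(ℓ+1)) / (a²(ℓ+1)·kR + k² + a²(ℓ²+ℓ+1)) for R ≥ 0. Then g'(R) > −a for all R ≥ 0. -/
/-- The auxiliary rational function `g` in the 3D existence proof satisfies
`g'(R) > -a` for all `R ≥ 0`. -/
theorem quasiMorse_3d_g_deriv_gt (a k ℓ : ℝ) (ha : 0 < a) (hk : 0 < k)
    (hℓ0 : 0 < ℓ) (hℓ1 : ℓ < 1) :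
    ∀ R : ℝ, 0 ≤ R →
      -a < deriv (fun R : ℝ =>
        (a / k) * ((a ^ 2 * ℓ - k ^ 2) * (k * R) + a ^ 2 * ℓ * (ℓ + 1)) /
          (a ^ 2 * (ℓ + 1) * (k * R) + k ^ 2 + a ^ 2 * (ℓ ^ 2 + ℓ + 1))) R := by
  intro R hR
  set D : ℝ := a ^ 2 * (ℓ + 1) * (k * R) + k ^ 2 + a ^ 2 * (ℓ ^ 2 + ℓ + 1) with hD
  have hDpos : 0 < D := by
    have : 0 ≤ a ^ 2 * (ℓ + 1) * (k * R) := by positivity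
    nlinarith [sq_nonneg a, sq_nonneg k, mul_pos ha hk]
  have hnum : HasDerivAt (fun R : ℝ =>
      (a / k) * ((a ^ 2 * ℓ - k ^ 2) * (k * R) + a ^ 2 * ℓ * (ℓ + 1)))
      ((a / k) * ((a ^ 2 * ℓ - k ^ 2) * k)) R := by
    have h : HasDerivAt (fun R : ℝ => (a ^ 2 * ℓ - k ^ 2) * (k * R) + a ^ 2 * ℓ * (ℓ + 1))
        ((a ^ 2 * ℓ - k ^ 2) * k) R := by
      have := ((hasDerivAt_id R).const_mul k).const_mul (a ^ 2 * ℓ - k ^ 2)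
      simpa using this.add_const (a ^ 2 * ℓ * (ℓ + 1))
    simpa [mul_assoc] using h.const_mul (a / k)
  have hden : HasDerivAt (fun R : ℝ =>
      a ^ 2 * (ℓ + 1) * (k * R) + k ^ 2 + a ^ 2 * (ℓ ^ 2 + ℓ + 1))
      (a ^ 2 * (ℓ + 1) * k) R := by
    have h := ((hasDerivAt_id R).const_mul k).const_mul (a ^ 2 * (ℓ + 1))
    simpa using (h.add_const (k ^ 2)).add_const (a ^ 2 * (ℓ ^ 2 + ℓ + 1))
  have hdiv : HasDerivAt (fun R : ℝ =>
      (a / k) * ((a ^ 2 * ℓ - k ^ 2) * (k * R) + a ^ 2 * ℓ * (ℓ + 1)) /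
        (a ^ 2 * (ℓ + 1) * (k * R) + k ^ 2 + a ^ 2 * (ℓ ^ 2 + ℓ + 1))) _ R :=
    hnum.div hden (ne_of_gt hDpos)
  rw [hdiv.deriv]
  rw [lt_div_iff₀ (by positivity)]
  have hk' : k ≠ 0 := ne_of_gt hk
  field_simp
  have hRk : 0 ≤ k * R := by positivity
  have hT : k ^ 2 + a ^ 2 * (ℓ ^ 2 + ℓ + 1) ≤ D := by
    nlinarith [mul_nonneg (by positivity : (0:ℝ) ≤ a ^ 2 * (ℓ + 1)) hRk]
  have key : (k ^ 2 + a ^ 2) * (k ^ 2 + a ^ 2 * ℓ ^ 2) < (k ^ 2 + a ^ 2 * (ℓ ^ 2 + ℓ + 1)) ^ 2 := by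
    nlinarith [mul_pos (mul_pos ha ha) (mul_pos hk hk), sq_nonneg (a * ℓ),
      mul_pos (mul_pos ha ha) (mul_pos ha ha), mul_pos hℓ0 hℓ0,
      mul_nonneg (sq_nonneg k) (sq_nonneg (a * ℓ)),
      mul_nonneg (mul_nonneg (sq_nonneg a) (sq_nonneg (a*ℓ))) hℓ0.le]
  have keyD : (k ^ 2 + a ^ 2) * (k ^ 2 + a ^ 2 * ℓ ^ 2) < D ^ 2 := by
    have h2 : (k ^ 2 + a ^ 2 * (ℓ ^ 2 + ℓ + 1)) ^ 2 ≤ D ^ 2 := by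
      have h0 : (0:ℝ) < k ^ 2 + a ^ 2 * (ℓ ^ 2 + ℓ + 1) := by positivity
      nlinarith
    linarith
  have hak : 0 < a * k := mul_pos ha hk
  rw [hD] at keyD
  nlinarith [mul_lt_mul_of_pos_left keyD hak]
end

section
/- Let a, k > 0 and 0 < ℓ < 1, and let g(R) = (a/k)·((a²ℓ − k²)·kR + a²ℓ(ℓ+1)) / (a²(ℓ+1)·kR + k² + a²(ℓ²+ℓ+1)). Then on each open interval ((j−1/2)π/a, (j+1/2)π/a) for j ≥ 1, the function h(R) = tan(aR) + g(R) is strictly increasing and has exactly one zero. -/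
open Real Filter Set Topology

set_option maxHeartbeats 1000000

/-- On each interval between consecutive poles of `tan (a R)`, the function
`tan (a R) + g R` is strictly increasing and has exactly one zero. -/
theorem quasiMorse_3d_unique_root (a k ℓ : ℝ) (ha : 0 < a) (hk : 0 < k)
    (hℓ0 : 0 < ℓ) (hℓ1 : ℓ < 1) (g : ℝ → ℝ)
    (hg : ∀ R : ℝ, g R =
      (a / k) * ((a ^ 2 * ℓ - k ^ 2) * (k * R) + a ^ 2 * ℓ * (ℓ + 1)) /
        (a ^ 2 * (ℓ + 1) * (k * R) + k ^ 2 + a ^ 2 * (ℓ ^ 2 + ℓ + 1))) :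
    ∀ j : ℕ, 1 ≤ j →
      StrictMonoOn (fun R => Real.tan (a * R) + g R)
        (Set.Ioo (((j : ℝ) - 1 / 2) * π / a) (((j : ℝ) + 1 / 2) * π / a)) ∧
      ∃! R : ℝ, R ∈ Set.Ioo (((j : ℝ) - 1 / 2) * π / a) (((j : ℝ) + 1 / 2) * π / a) ∧
        Real.tan (a * R) + g R = 0 := by
  intro j hj
  have hπ := Real.pi_pos
  have hj1 : (1:ℝ) ≤ (j:ℝ) := by exact_mod_cast hj
  set L : ℝ := ((j : ℝ) - 1 / 2) * π / a with hLdef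
  set U : ℝ := ((j : ℝ) + 1 / 2) * π / a with hUdef
  have haL : a * L = ((j:ℝ) - 1/2) * π := by rw [hLdef]; field_simp
  have haU : a * U = ((j:ℝ) + 1/2) * π := by rw [hUdef]; field_simp
  have hL0 : 0 < L := by
    have h1 : (0:ℝ) < (j:ℝ) - 1/2 := by linarith
    exact div_pos (mul_pos h1 hπ) ha
  have hLU : L < U := by
    rw [hLdef, hUdef, div_lt_div_iff_of_pos_right ha]
    nlinarith
  -- denominator
  set D : ℝ → ℝ := fun R => a ^ 2 * (ℓ + 1) * (k * R) + k ^ 2 + a ^ 2 * (ℓ ^ 2 + ℓ + 1)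
    with hDdef
  have hDpos : ∀ R : ℝ, 0 < R → 0 < D R := by
    intro R hR
    have h1 : 0 < a ^ 2 * (ℓ + 1) * (k * R) := by positivity
    have h2 : 0 < a ^ 2 * (ℓ ^ 2 + ℓ + 1) := by positivity
    simp only [hDdef]; nlinarith
  -- cos nonzero on the interval
  have hcos : ∀ R ∈ Set.Ioo L U, Real.cos (a * R) ≠ 0 := by
    intro R hR hc
    obtain ⟨n, hn⟩ := Real.cos_eq_zero_iff.1 hc
    have h1 : ((j:ℝ) - 1/2) * π < a * R := by
      have := hR.1; nlinarith [mul_lt_mul_of_pos_left this ha]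
    have h2 : a * R < ((j:ℝ) + 1/2) * π := by
      have := hR.2; nlinarith [mul_lt_mul_of_pos_left this ha]
    rw [hn] at h1 h2
    have hn1 : ((j:ℝ) : ℝ) - 1 < (n:ℝ) := by nlinarith
    have hn2 : (n:ℝ) < (j:ℝ) := by nlinarith
    have hn1' : (j:ℤ) - 1 < n := by exact_mod_cast hn1
    have hn2' : n < (j:ℤ) := by exact_mod_cast hn2
    omega
  -- derivative of g
  have hg' : ∀ R : ℝ, 0 < R →
      HasDerivAt g (-(a * (k^2 + a^2*ℓ^2) * (k^2 + a^2)) / (D R)^2) R := by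
    intro R hR
    have hD0 : D R ≠ 0 := ne_of_gt (hDpos R hR)
    have h1 : HasDerivAt (fun R : ℝ => k * R) k R := by
      simpa using (hasDerivAt_id R).const_mul k
    have hN : HasDerivAt
        (fun R : ℝ => (a / k) * ((a ^ 2 * ℓ - k ^ 2) * (k * R) + a ^ 2 * ℓ * (ℓ + 1)))
        ((a / k) * ((a ^ 2 * ℓ - k ^ 2) * k)) R :=
      ((h1.const_mul (a ^ 2 * ℓ - k ^ 2)).add_const (a ^ 2 * ℓ * (ℓ + 1))).const_mul (a / k)
    have hD : HasDerivAt D (a ^ 2 * (ℓ + 1) * k) R := by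
      simpa [hDdef] using
        ((h1.const_mul (a ^ 2 * (ℓ + 1))).add_const (k ^ 2)).add_const
          (a ^ 2 * (ℓ ^ 2 + ℓ + 1))
    have hdiv := hN.div hD hD0
    have hgeq : g = fun R : ℝ =>
        (a / k) * ((a ^ 2 * ℓ - k ^ 2) * (k * R) + a ^ 2 * ℓ * (ℓ + 1)) / D R :=
      funext hg
    rw [hgeq]
    have hdiv' : HasDerivAt (fun R : ℝ =>
        (a / k) * ((a ^ 2 * ℓ - k ^ 2) * (k * R) + a ^ 2 * ℓ * (ℓ + 1)) / D R) _ R := hdiv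
    convert hdiv' using 1
    have hk0 : k ≠ 0 := ne_of_gt hk
    field_simp
    ring
  -- derivative of the whole function
  set f : ℝ → ℝ := fun R => Real.tan (a * R) + g R with hfdef
  set P : ℝ := a * (k^2 + a^2*ℓ^2) * (k^2 + a^2) with hPdef
  have key : ∀ R ∈ Set.Ioo L U,
      HasDerivAt f (a * (1 / Real.cos (a*R)^2) + -P / (D R)^2) R := by
    intro R hR
    have hR0 : 0 < R := lt_trans hL0 hR.1
    have htan : HasDerivAt (fun R : ℝ => Real.tan (a * R)) (a * (1 / Real.cos (a*R)^2)) R := by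
      have h1 : HasDerivAt (fun R : ℝ => a * R) a R := by
        simpa using (hasDerivAt_id R).const_mul a
      have := (Real.hasDerivAt_tan (hcos R hR)).comp R h1
      simpa [mul_comm, Function.comp_def] using this
    exact htan.add (hg' R hR0)
  have hderiv_pos : ∀ R ∈ Set.Ioo L U, 0 < a * (1 / Real.cos (a*R)^2) + -P / (D R)^2 := by
    intro R hR
    have hR0 : 0 < R := lt_trans hL0 hR.1
    have hc2 : 0 < Real.cos (a*R)^2 := by
      have := hcos R hR; positivity
    have hc2le : Real.cos (a*R)^2 ≤ 1 := by
      nlinarith [Real.neg_one_le_cos (a*R), Real.cos_le_one (a*R)]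
    have h1 : a ≤ a * (1 / Real.cos (a*R)^2) :=
      le_mul_of_one_le_right ha.le (one_le_one_div hc2 hc2le)
    have hDR : 0 < D R := hDpos R hR0
    have hDge : k ^ 2 + a ^ 2 * (ℓ ^ 2 + ℓ + 1) ≤ D R := by
      have : 0 < a ^ 2 * (ℓ + 1) * (k * R) := by positivity
      simp only [hDdef]; nlinarith
    have hP : P < a * (D R)^2 := by
      have hcpos : 0 < k^2 + a^2*(ℓ^2+ℓ+1) := by positivity
      have hc1 : k^2 + a^2*ℓ^2 < k^2 + a^2*(ℓ^2+ℓ+1) := by nlinarith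
      have hc2' : k^2 + a^2 < k^2 + a^2*(ℓ^2+ℓ+1) := by nlinarith
      have hp1 : (k^2+a^2*ℓ^2)*(k^2+a^2) <
          (k^2+a^2*(ℓ^2+ℓ+1))*(k^2+a^2*(ℓ^2+ℓ+1)) :=
        mul_lt_mul'' hc1 hc2' (by positivity) (by positivity)
      have hp2 : (k^2+a^2*(ℓ^2+ℓ+1))*(k^2+a^2*(ℓ^2+ℓ+1)) ≤ D R * D R :=
        mul_le_mul hDge hDge hcpos.le (le_trans hcpos.le hDge)
      have hfin := mul_lt_mul_of_pos_left (lt_of_lt_of_le hp1 hp2) ha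
      rw [hPdef]; nlinarith [hfin]
    have h2 : -P / (D R)^2 > -a := by
      rw [gt_iff_lt, neg_lt, neg_div, neg_neg, div_lt_iff₀ (by positivity : (0:ℝ) < (D R)^2)]
      nlinarith
    linarith
  have hmono : StrictMonoOn f (Set.Ioo L U) := by
    apply strictMonoOn_of_deriv_pos (convex_Ioo L U)
    · intro R hR
      exact (key R hR).continuousAt.continuousWithinAt
    · intro R hR
      rw [interior_Ioo] at hR
      rw [(key R hR).deriv]
      exact hderiv_pos R hR
  refine ⟨hmono, ?_⟩
  -- limits at endpoints
  have htanL : Tendsto (fun R => Real.tan (a * R)) (𝓝[>] L) atBot := by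
    have hφ : Tendsto (fun R : ℝ => a * R - j * π) (𝓝[>] L) (𝓝[>] (-(π/2))) := by
      rw [tendsto_nhdsWithin_iff]
      constructor
      · apply tendsto_nhdsWithin_of_tendsto_nhds
        have : Continuous (fun R : ℝ => a * R - j * π) := by continuity
        have := this.tendsto L
        convert this using 2
        rw [haL]; ring
      · filter_upwards [self_mem_nhdsWithin] with R hR
        have : a * L < a * R := by exact mul_lt_mul_of_pos_left hR ha
        rw [haL] at this
        simp only [Set.mem_Ioi]
        nlinarith
    have := Real.tendsto_tan_neg_pi_div_two.comp hφ
    refine this.congr fun R => ?_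
    simp only [Function.comp]
    exact Real.tan_periodic.sub_nat_mul_eq j
  have htanU : Tendsto (fun R => Real.tan (a * R)) (𝓝[<] U) atTop := by
    have hφ : Tendsto (fun R : ℝ => a * R - j * π) (𝓝[<] U) (𝓝[<] (π/2)) := by
      rw [tendsto_nhdsWithin_iff]
      constructor
      · apply tendsto_nhdsWithin_of_tendsto_nhds
        have : Continuous (fun R : ℝ => a * R - j * π) := by continuity
        have := this.tendsto U
        convert this using 2
        rw [haU]; ring
      · filter_upwards [self_mem_nhdsWithin] with R hR
        have : a * R < a * U := by exact mul_lt_mul_of_pos_left hR ha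
        rw [haU] at this
        simp only [Set.mem_Iio]
        nlinarith
    have := Real.tendsto_tan_pi_div_two.comp hφ
    refine this.congr fun R => ?_
    simp only [Function.comp]
    exact Real.tan_periodic.sub_nat_mul_eq j
  have hgcont : ∀ R : ℝ, 0 < R → ContinuousAt g R := by
    intro R hR
    have hgeq : g = fun R : ℝ =>
        (a / k) * ((a ^ 2 * ℓ - k ^ 2) * (k * R) + a ^ 2 * ℓ * (ℓ + 1)) / D R :=
      funext hg
    rw [hgeq]
    exact ContinuousAt.div (by fun_prop) (by fun_prop) (ne_of_gt (hDpos R hR))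
  have hfL : Tendsto f (𝓝[>] L) atBot := by
    have hgL : Tendsto g (𝓝[>] L) (𝓝 (g L)) :=
      ((hgcont L hL0).tendsto).mono_left nhdsWithin_le_nhds
    have hbd : ∀ᶠ R in 𝓝[>] L, g R ≤ g L + 1 :=
      hgL.eventually (eventually_le_nhds (by linarith))
    exact tendsto_atBot_add_right_of_ge' _ (g L + 1) htanL hbd
  have hfU : Tendsto f (𝓝[<] U) atTop := by
    have hgU : Tendsto g (𝓝[<] U) (𝓝 (g U)) :=
      ((hgcont U (lt_trans hL0 hLU)).tendsto).mono_left nhdsWithin_le_nhds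
    have hbd : ∀ᶠ R in 𝓝[<] U, g U - 1 ≤ g R :=
      hgU.eventually (eventually_ge_nhds (by linarith))
    exact tendsto_atTop_add_right_of_le' _ (g U - 1) htanU hbd
  -- find points with negative and positive values
  have hmemL : Set.Ioo L U ∈ 𝓝[>] L := Ioo_mem_nhdsGT_of_mem ⟨le_refl L, hLU⟩
  have hmemU : Set.Ioo L U ∈ 𝓝[<] U := Ioo_mem_nhdsLT_of_mem ⟨hLU, le_refl U⟩
  obtain ⟨x, hxneg, hx⟩ := ((hfL.eventually (eventually_lt_atBot 0)).and
    (eventually_of_mem hmemL fun R h => h)).exists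
  obtain ⟨y, hypos, hy⟩ := ((hfU.eventually (eventually_gt_atTop 0)).and
    (eventually_of_mem hmemU fun R h => h)).exists
  have hxy : x < y := by
    rcases lt_trichotomy x y with h | h | h
    · exact h
    · exfalso; rw [h] at hxneg; linarith
    · exfalso; have := hmono hy hx h; linarith
  have hsub : Set.Icc x y ⊆ Set.Ioo L U := fun z hz =>
    ⟨lt_of_lt_of_le hx.1 hz.1, lt_of_le_of_lt hz.2 hy.2⟩
  have hcont : ContinuousOn f (Set.Icc x y) := fun z hz =>
    (key z (hsub hz)).continuousAt.continuousWithinAt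
  have hivt := intermediate_value_Icc (le_of_lt hxy) hcont
  have h0mem : (0:ℝ) ∈ Set.Icc (f x) (f y) := ⟨le_of_lt hxneg, le_of_lt hypos⟩
  obtain ⟨z, hz, hfz⟩ := hivt h0mem
  refine ⟨z, ⟨hsub hz, hfz⟩, ?_⟩
  rintro w ⟨hw, hfw⟩
  exact hmono.injOn hw (hsub hz) (by show f w = f z; rw [show f w = 0 from hfw, hfz])
end

section
/- The function r ↦ sin(a r)/r (with a > 0), extended by the value a at r = 0, is strictly decreasing on [0, r̄₁], where r̄₁ is the smallest positive solution of tan(a r) = a r in the interval (π/(2a), 3π/(2a)). -/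
open Real

lemma sin_sub_mul_cos_pos : ∀ x ∈ Set.Ioc 0 π, 0 < Real.sin x - x * Real.cos x := by
  have hmono : StrictMonoOn (fun x => Real.sin x - x * Real.cos x) (Set.Icc 0 π) := by
    apply strictMonoOn_of_deriv_pos (convex_Icc 0 π)
    · fun_prop
    · intro x hx
      rw [interior_Icc] at hx
      have hd : HasDerivAt (fun x => Real.sin x - x * Real.cos x)
          (Real.cos x - (1 * Real.cos x + x * (-Real.sin x))) x :=
        (Real.hasDerivAt_sin x).sub ((hasDerivAt_id x).mul (Real.hasDerivAt_cos x))
      rw [hd.deriv]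
      have h0 := hx.1
      have := Real.sin_pos_of_pos_of_lt_pi hx.1 hx.2
      nlinarith
  intro x hx
  have := hmono (by simp [Real.pi_pos.le]) (Set.mem_Icc.mpr ⟨hx.1.le, hx.2⟩) hx.1
  simpa using this

lemma numerator_neg (a rbar : ℝ) (ha : 0 < a) (h1 : π / 2 < a * rbar)
    (h2 : a * rbar < 3 * π / 2)
    (hmin' : ∀ s, π / 2 < s → s < 3 * π / 2 → Real.tan s = s → a * rbar ≤ s) :
    ∀ x ∈ Set.Ioo 0 (a * rbar), x * Real.cos x - Real.sin x < 0 := by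
  intro x hx
  obtain ⟨hx0, hxu⟩ := hx
  rcases le_or_gt x π with hxpi | hxpi
  · have := sin_sub_mul_cos_pos x ⟨hx0, hxpi⟩
    linarith
  · -- π < x < a * rbar < 3π/2
    have hx32 : x < 3 * π / 2 := lt_trans hxu h2
    have hcosneg : Real.cos x < 0 := by
      apply Real.cos_neg_of_pi_div_two_lt_of_lt
      · linarith [Real.pi_pos]
      · linarith
    have htanlt : Real.tan x < x := by
      by_contra h
      push_neg at h
      -- IVT on [π, x] for tan t - t
      have hcont : ContinuousOn (fun t => Real.tan t - t) (Set.Icc π x) := by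
        apply ContinuousOn.sub _ continuousOn_id
        intro t ht
        have h1t : π / 2 < t := by
          have := ht.1; linarith [Real.pi_pos]
        have h2t : t < π + π / 2 := by
          have := ht.2; linarith
        exact (Real.continuousAt_tan.mpr
          (ne_of_lt (Real.cos_neg_of_pi_div_two_lt_of_lt h1t h2t))).continuousWithinAt
      have hmem0 : (0 : ℝ) ∈ Set.Icc ((fun t => Real.tan t - t) π)
          ((fun t => Real.tan t - t) x) := by
        simp only [Real.tan_pi]
        constructor
        · simp; linarith [Real.pi_pos]
        · simpa using h
      obtain ⟨s, hs, hs0⟩ := intermediate_value_Icc hxpi.le hcont hmem0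
      have hts : Real.tan s = s := by linarith [sub_eq_zero.mp hs0]
      have hspi : π < s := by
        rcases lt_or_eq_of_le hs.1 with h' | h'
        · exact h'
        · exfalso
          rw [← h'] at hts
          rw [Real.tan_pi] at hts
          linarith [Real.pi_pos]
      have hsx := hs.2
      have : a * rbar ≤ s := hmin' s (by linarith [Real.pi_pos]) (by linarith) hts
      linarith
    have hcosne : Real.cos x ≠ 0 := ne_of_lt hcosneg
    have key : x * Real.cos x - Real.sin x = Real.cos x * (x - Real.tan x) := by
      rw [Real.tan_eq_sin_div_cos]
      field_simp
    rw [key]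
    exact mul_neg_of_neg_of_pos hcosneg (by linarith)

/-- The function `r ↦ sin (a r) / r`, extended by the value `a` at `r = 0`, is
strictly decreasing on `[0, r̄₁]`, where `r̄₁` is the smallest solution of
`tan (a r) = a r` in `(π/(2a), 3π/(2a))`. -/
theorem sin_div_self_strictAnti (a rbar : ℝ) (ha : 0 < a)
    (hmem : rbar ∈ Set.Ioo (π / (2 * a)) (3 * π / (2 * a)))
    (htan : Real.tan (a * rbar) = a * rbar)
    (hmin : ∀ s ∈ Set.Ioo (π / (2 * a)) (3 * π / (2 * a)),
      Real.tan (a * s) = a * s → rbar ≤ s) :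
    StrictAntiOn (fun r : ℝ => if r = 0 then a else Real.sin (a * r) / r)
      (Set.Icc 0 rbar) := by
  have h2a : (0:ℝ) < 2 * a := by linarith
  have h1 : π / 2 < a * rbar := by
    have := hmem.1
    rw [div_lt_iff₀ h2a] at this
    linarith
  have h2 : a * rbar < 3 * π / 2 := by
    have := hmem.2
    rw [lt_div_iff₀ h2a] at this
    linarith
  have hrbar0 : 0 < rbar := by
    have : 0 < a * rbar := lt_trans (by positivity) h1
    nlinarith
  have hmin' : ∀ s, π / 2 < s → s < 3 * π / 2 → Real.tan s = s → a * rbar ≤ s := by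
    intro s hs1 hs2 hts
    have hsa : 0 < s := lt_trans (by positivity) hs1
    have hmem2 : s / a ∈ Set.Ioo (π / (2 * a)) (3 * π / (2 * a)) := by
      constructor
      · rw [div_lt_div_iff₀ h2a ha]; nlinarith
      · rw [div_lt_div_iff₀ ha h2a]; nlinarith
    have htan2 : Real.tan (a * (s / a)) = a * (s / a) := by
      rw [mul_div_cancel₀ _ (ne_of_gt ha)]; exact hts
    have := hmin (s / a) hmem2 htan2
    calc a * rbar ≤ a * (s / a) := by
          apply mul_le_mul_of_nonneg_left this ha.le
      _ = s := mul_div_cancel₀ _ (ne_of_gt ha)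
  have hnum := numerator_neg a rbar ha h1 h2 hmin'
  -- strict anti on Ioc 0 rbar for g r = sin (a r) / r
  have hanti : StrictAntiOn (fun r : ℝ => Real.sin (a * r) / r) (Set.Ioc 0 rbar) := by
    apply strictAntiOn_of_deriv_neg (convex_Ioc 0 rbar)
    · apply ContinuousOn.div (by fun_prop) continuousOn_id
      intro r hr; exact ne_of_gt hr.1
    · intro r hr
      rw [interior_Ioc] at hr
      have hr0 : r ≠ 0 := ne_of_gt hr.1
      have hd : HasDerivAt (fun r : ℝ => Real.sin (a * r) / r)
          ((Real.cos (a * r) * a * r - Real.sin (a * r) * 1) / r ^ 2) r := by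
        have hs : HasDerivAt (fun r : ℝ => Real.sin (a * r)) (Real.cos (a * r) * a) r := by
          have := (Real.hasDerivAt_sin (a * r)).comp r ((hasDerivAt_id r).const_mul a)
          simpa [Function.comp_def] using this
        exact hs.div (hasDerivAt_id r) hr0
      rw [hd.deriv]
      apply div_neg_of_neg_of_pos
      · have := hnum (a * r) ⟨mul_pos ha hr.1, by nlinarith [hr.2]⟩
        nlinarith
      · positivity
  intro x hx y hy hxy
  rcases eq_or_ne x 0 with rfl | hx0
  · have hy0 : y ≠ 0 := ne_of_gt hxy
    simp only [if_neg hy0, eq_self_iff_true, if_true]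
    -- sin (a y) / y < a
    have hay : 0 < a * y := by positivity
    have := Real.sin_lt hay
    rw [div_lt_iff₀ hxy]
    nlinarith
  · have hy0 : y ≠ 0 := by
      intro h; rw [h] at hxy
      exact absurd hxy (not_lt.mpr hx.1)
    simp only [if_neg hx0, if_neg hy0]
    exact hanti ⟨lt_of_le_of_ne hx.1 (Ne.symm hx0), hx.2⟩
      ⟨lt_of_le_of_ne hy.1 (Ne.symm hy0), hy.2⟩ hxy
end

section
/- Let a, k > 0 and 0 < ℓ < 1, and let D(R) be as in the 3D determinant: D(R) = c₁(R)·sin(aR) + c₂(R)·cos(aR) with c₁, c₂ defined via c₁(R) = k√(2/(aπ))·(1/((1+a²ℓ²/k²)(kR+ℓ)) − 1/((1+a²/k²)(kR+1))), c₂(R) = √(2a/π)·(ℓ/((1+a²ℓ²/k²)(kR+ℓ)) − 1/((1+a²/k²)(kR+1))). Then D(0) = √(2a/π)·(1/(1+a²ℓ²/k²) − 1/(1+a²/k²)) > 0, and D has no zero in the interval (0, π/(2a)). -/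
set_option maxHeartbeats 1000000


open Real

/-- The 3D determinant `det M₊` is explicit and positive at `R = 0` and has no
zero on `(0, π/(2a))`. -/
theorem quasiMorse_3d_detM_no_zero_first_interval (a k ℓ : ℝ) (ha : 0 < a)
    (hk : 0 < k) (hℓ0 : 0 < ℓ) (hℓ1 : ℓ < 1) (c₁ c₂ D : ℝ → ℝ)
    (hc₁ : ∀ R : ℝ, c₁ R = k * Real.sqrt (2 / (a * π)) *
      (1 / ((1 + a ^ 2 * ℓ ^ 2 / k ^ 2) * (k * R + ℓ)) -
        1 / ((1 + a ^ 2 / k ^ 2) * (k * R + 1))))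
    (hc₂ : ∀ R : ℝ, c₂ R = Real.sqrt (2 * a / π) *
      (ℓ / ((1 + a ^ 2 * ℓ ^ 2 / k ^ 2) * (k * R + ℓ)) -
        1 / ((1 + a ^ 2 / k ^ 2) * (k * R + 1))))
    (hD : ∀ R : ℝ, D R = c₁ R * Real.sin (a * R) + c₂ R * Real.cos (a * R)) :
    D 0 = Real.sqrt (2 * a / π) *
        (1 / (1 + a ^ 2 * ℓ ^ 2 / k ^ 2) - 1 / (1 + a ^ 2 / k ^ 2)) ∧
      0 < D 0 ∧
      ∀ R ∈ Set.Ioo (0 : ℝ) (π / (2 * a)), D R ≠ 0 := by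
  have hπ : (0:ℝ) < π := Real.pi_pos
  have hk2 : (0:ℝ) < k ^ 2 := by positivity
  have hd₁ : (0:ℝ) < 1 + a ^ 2 * ℓ ^ 2 / k ^ 2 := by positivity
  have hd₂ : (0:ℝ) < 1 + a ^ 2 / k ^ 2 := by positivity
  have hℓne : ℓ ≠ 0 := ne_of_gt hℓ0
  have hD0 : D 0 = Real.sqrt (2 * a / π) *
      (1 / (1 + a ^ 2 * ℓ ^ 2 / k ^ 2) - 1 / (1 + a ^ 2 / k ^ 2)) := by
    have h1 : c₂ 0 = Real.sqrt (2 * a / π) *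
        (1 / (1 + a ^ 2 * ℓ ^ 2 / k ^ 2) - 1 / (1 + a ^ 2 / k ^ 2)) := by
      rw [hc₂, mul_zero, zero_add, zero_add, mul_one]
      congr 2
      rw [mul_comm (1 + a ^ 2 * ℓ ^ 2 / k ^ 2) ℓ, ← div_div, div_self hℓne]
    rw [hD, h1, mul_zero, Real.sin_zero, Real.cos_zero, mul_zero, zero_add, mul_one]
  have hsqrt_pos : 0 < Real.sqrt (2 * a / π) := Real.sqrt_pos.mpr (by positivity)
  have hd₁d₂ : 1 + a ^ 2 * ℓ ^ 2 / k ^ 2 < 1 + a ^ 2 / k ^ 2 := by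
    have hℓ2 : 0 < 1 - ℓ ^ 2 := by nlinarith [mul_pos (show (0:ℝ) < 1 - ℓ by linarith) (show (0:ℝ) < 1 + ℓ by linarith)]
    have hnum : a ^ 2 * ℓ ^ 2 < a ^ 2 := by nlinarith [mul_pos (pow_pos ha 2) hℓ2]
    have : a ^ 2 * ℓ ^ 2 / k ^ 2 < a ^ 2 / k ^ 2 := by
      exact (div_lt_div_iff_of_pos_right hk2).mpr hnum
    linarith
  have hD0pos : 0 < D 0 := by
    rw [hD0]
    apply mul_pos hsqrt_pos
    have := one_div_lt_one_div_of_lt hd₁ hd₁d₂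
    linarith
  refine ⟨hD0, hD0pos, ?_⟩
  intro R hR
  obtain ⟨hR0, hR2⟩ := hR
  -- x := a * R lies in (0, π/2)
  have hx0 : 0 < a * R := mul_pos ha hR0
  have hx2 : a * R < π / 2 := by
    have := (mul_lt_mul_iff_right₀ ha).mpr hR2
    calc a * R < a * (π / (2 * a)) := this
      _ = π / 2 := by field_simp
  have hsin : 0 < Real.sin (a * R) := Real.sin_pos_of_pos_of_lt_pi hx0 (by linarith)
  have hcos : 0 < Real.cos (a * R) := Real.cos_pos_of_mem_Ioo ⟨by linarith, hx2⟩
  have htan : a * R < Real.tan (a * R) := Real.lt_tan hx0 hx2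
  have hsingt : a * R * Real.cos (a * R) < Real.sin (a * R) := by
    rw [Real.tan_eq_sin_div_cos] at htan
    calc a * R * Real.cos (a * R)
        < Real.sin (a * R) / Real.cos (a * R) * Real.cos (a * R) := by
          exact mul_lt_mul_of_pos_right htan hcos
      _ = Real.sin (a * R) := by field_simp
  have he₁ : 0 < k * R + ℓ := by positivity
  have he₂ : 0 < k * R + 1 := by positivity
  -- key polynomial quantities
  set A : ℝ := (k ^ 2 + a ^ 2) * (k * R + 1) - (k ^ 2 + a ^ 2 * ℓ ^ 2) * (k * R + ℓ) with hAdef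
  set B : ℝ := ℓ * (k ^ 2 + a ^ 2) * (k * R + 1) - (k ^ 2 + a ^ 2 * ℓ ^ 2) * (k * R + ℓ) with hBdef
  have hA : 0 < A := by
    have h1 : A = a ^ 2 * (1 - ℓ ^ 2) * (k * R) + k ^ 2 * (1 - ℓ) + a ^ 2 * (1 - ℓ ^ 3) := by
      rw [hAdef]; ring
    rw [h1]
    have hkR : 0 < k * R := mul_pos hk hR0
    have h2 : 0 < 1 - ℓ ^ 2 := by nlinarith
    have h3 : 0 < 1 - ℓ ^ 3 := by nlinarith
    have h4 : 0 < 1 - ℓ := by linarith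
    positivity
  have hkey : k * A * R + B = a ^ 2 * (1 - ℓ) * (1 + ℓ) * (k * R + 1) * (k * R + ℓ) := by
    rw [hAdef, hBdef]; ring
  have hF : 0 < k * A * Real.sin (a * R) + a * B * Real.cos (a * R) := by
    have h1 : k * A * (a * R * Real.cos (a * R)) < k * A * Real.sin (a * R) :=
      mul_lt_mul_of_pos_left hsingt (mul_pos hk hA)
    have h2 : 0 < k * A * (a * R * Real.cos (a * R)) + a * B * Real.cos (a * R) := by
      have h3 : k * A * (a * R * Real.cos (a * R)) + a * B * Real.cos (a * R)
          = a * Real.cos (a * R) * (k * A * R + B) := by ring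
      rw [h3, hkey]
      have h4 : 0 < 1 - ℓ := by linarith
      positivity
    linarith
  -- express D R with a common sqrt factor
  have hsq : Real.sqrt (2 * a / π) = a * Real.sqrt (2 / (a * π)) := by
    rw [show (2 * a / π) = a ^ 2 * (2 / (a * π)) by field_simp,
      Real.sqrt_mul (by positivity), Real.sqrt_sq ha.le]
  have hs : 0 < Real.sqrt (2 / (a * π)) := Real.sqrt_pos.mpr (by positivity)
  have hDpos : 0 < D R := by
    rw [hD, hc₁, hc₂, hsq]
    set s := Real.sqrt (2 / (a * π)) with hsdef
    set G : ℝ := k * (1 / ((1 + a ^ 2 * ℓ ^ 2 / k ^ 2) * (k * R + ℓ)) -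
        1 / ((1 + a ^ 2 / k ^ 2) * (k * R + 1))) * Real.sin (a * R) +
      a * (ℓ / ((1 + a ^ 2 * ℓ ^ 2 / k ^ 2) * (k * R + ℓ)) -
        1 / ((1 + a ^ 2 / k ^ 2) * (k * R + 1))) * Real.cos (a * R) with hGdef
    have hrw : k * s * (1 / ((1 + a ^ 2 * ℓ ^ 2 / k ^ 2) * (k * R + ℓ)) -
        1 / ((1 + a ^ 2 / k ^ 2) * (k * R + 1))) * Real.sin (a * R) +
      a * s * (ℓ / ((1 + a ^ 2 * ℓ ^ 2 / k ^ 2) * (k * R + ℓ)) -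
        1 / ((1 + a ^ 2 / k ^ 2) * (k * R + 1))) * Real.cos (a * R) = s * G := by
      rw [hGdef]; ring
    rw [hrw]
    apply mul_pos hs
    -- G * M = F with M the product of denominators times k²
    have hM : 0 < k ^ 2 * ((1 + a ^ 2 * ℓ ^ 2 / k ^ 2) * (k * R + ℓ)) *
        ((1 + a ^ 2 / k ^ 2) * (k * R + 1)) := by positivity
    have hGM : G * (k ^ 2 * ((1 + a ^ 2 * ℓ ^ 2 / k ^ 2) * (k * R + ℓ)) *
        ((1 + a ^ 2 / k ^ 2) * (k * R + 1)))
        = k * A * Real.sin (a * R) + a * B * Real.cos (a * R) := by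
      rw [hGdef, hAdef, hBdef]
      have hk0 : k ≠ 0 := ne_of_gt hk
      have he₁' : k * R + ℓ ≠ 0 := ne_of_gt he₁
      have he₂' : k * R + 1 ≠ 0 := ne_of_gt he₂
      field_simp
    have hpos : 0 < G * (k ^ 2 * ((1 + a ^ 2 * ℓ ^ 2 / k ^ 2) * (k * R + ℓ)) *
        ((1 + a ^ 2 / k ^ 2) * (k * R + 1))) := hGM ▸ hF
    rcases mul_pos_iff.mp hpos with ⟨h, _⟩ | ⟨_, h'⟩
    · exact h
    · linarith
  exact ne_of_gt hDpos
end
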